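/- Let X be a finite simple graph with adjacency matrix A and let U(t) = exp(itA). For every ε > 0 there exists T > 0 such that every real interval of length T contains a time t with ‖U(t) − I‖ < ε; that is, for every real s there is t with s ≤ t ≤ s + T and ‖exp(itA) − I‖ < ε. -/

import Mathlib

open Matrix

noncomputable section

/-- The continuous quantum walk `U(t) = exp(itA)`. -/
def qWalk {n : Type*} [Fintype n] [DecidableEq n] (A : Matrix n n ℂ) (t : ℝ) :
    Matrix n n ℂ :=
  NormedSpace.exp ((Complex.I * (t : ℂ)) • A)

attribute [local instance] Matrix.normedAddCommGroup
attribute [local instance] Matrix.normedSpace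

section Aux

variable {n : Type*} [Fintype n] [DecidableEq n]

lemma qWalk_zero (A : Matrix n n ℂ) : qWalk A 0 = 1 := by
  simp [qWalk, NormedSpace.exp_zero]

lemma qWalk_add (A : Matrix n n ℂ) (s t : ℝ) :
    qWalk A (s + t) = qWalk A s * qWalk A t := by
  unfold qWalk
  rw [← Matrix.exp_add_of_commute _ _ (((Commute.refl A).smul_left _).smul_right _)]
  congr 1
  rw [← add_smul]
  push_cast
  ring_nf

lemma qWalk_conjTranspose {A : Matrix n n ℂ} (hA : Aᴴ = A) (t : ℝ) :
    (qWalk A t)ᴴ = qWalk A (-t) := by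
  unfold qWalk
  rw [← Matrix.exp_conjTranspose]
  congr 1
  rw [conjTranspose_smul, hA]
  congr 1
  simp [Complex.ext_iff]

lemma qWalk_mul_neg (A : Matrix n n ℂ) (t : ℝ) :
    qWalk A t * qWalk A (-t) = 1 := by
  rw [← qWalk_add, add_neg_cancel, qWalk_zero]

lemma qWalk_norm_le_one {A : Matrix n n ℂ} (hA : Aᴴ = A) (t : ℝ) :
    ‖qWalk A t‖ ≤ 1 := by
  have hU : (qWalk A t)ᴴ * qWalk A t = 1 := by
    rw [qWalk_conjTranspose hA, ← qWalk_add, neg_add_cancel, qWalk_zero]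
  rw [Matrix.norm_le_iff zero_le_one]
  intro i j
  have hdiag : ∑ k, Complex.normSq (qWalk A t k j) = 1 := by
    have := congrArg (fun M : Matrix n n ℂ => M j j) hU
    simp only [Matrix.mul_apply, Matrix.one_apply_eq, Matrix.conjTranspose_apply] at this
    have h2 : ∑ k, (Complex.normSq (qWalk A t k j) : ℂ) = 1 := by
      rw [← this]
      refine Finset.sum_congr rfl fun k _ => ?_
      rw [Complex.normSq_eq_conj_mul_self]
      rfl
    have := congrArg Complex.re h2
    simpa [Complex.ofReal_sum] using this
  have hle : Complex.normSq (qWalk A t i j) ≤ 1 := by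
    rw [← hdiag]
    exact Finset.single_le_sum (f := fun k => Complex.normSq (qWalk A t k j))
      (fun k _ => Complex.normSq_nonneg _) (Finset.mem_univ i)
  have hnorm : ‖qWalk A t i j‖ ^ 2 = Complex.normSq (qWalk A t i j) := by
    rw [Complex.sq_norm]
  nlinarith [norm_nonneg (qWalk A t i j)]

lemma matrix_norm_mul_le (M N : Matrix n n ℂ) :
    ‖M * N‖ ≤ (Fintype.card n : ℝ) * ‖M‖ * ‖N‖ := by
  have hnn : (0 : ℝ) ≤ (Fintype.card n : ℝ) * ‖M‖ * ‖N‖ := by positivity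
  rw [Matrix.norm_le_iff hnn]
  intro i j
  rw [Matrix.mul_apply]
  calc ‖∑ k, M i k * N k j‖ ≤ ∑ k, ‖M i k * N k j‖ := norm_sum_le _ _
    _ ≤ ∑ _k : n, ‖M‖ * ‖N‖ := by
        refine Finset.sum_le_sum fun k _ => ?_
        rw [norm_mul]
        exact mul_le_mul (Matrix.norm_entry_le_entrywise_sup_norm M)
          (Matrix.norm_entry_le_entrywise_sup_norm N) (norm_nonneg _) (norm_nonneg _)
    _ = (Fintype.card n : ℝ) * ‖M‖ * ‖N‖ := by
        rw [Finset.sum_const, Finset.card_univ, nsmul_eq_mul, mul_assoc]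

end Aux

/-- every continuous quantum walk on a graph is approximately periodic: for each
`ε > 0` there is `T > 0` such that every real interval of length `T` contains a time `t`
with `‖U(t) − I‖ < ε`. -/
theorem approximately_periodic {V : Type*} [Fintype V] [DecidableEq V]
    (X : SimpleGraph V) [DecidableRel X.Adj]
    (ε : ℝ) (hε : 0 < ε) :
    ∃ T : ℝ, 0 < T ∧ ∀ s : ℝ, ∃ t : ℝ, s ≤ t ∧ t ≤ s + T ∧
      ‖qWalk (X.adjMatrix ℂ) t - 1‖ < ε := by
  classical
  set A := X.adjMatrix ℂ with hAdef
  have hA : Aᴴ = A := by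
    ext i j
    simp [hAdef, Matrix.conjTranspose_apply, SimpleGraph.adjMatrix_apply, X.adj_comm i j,
      apply_ite (starRingEnd ℂ)]
  by_cases hV : Nonempty V
  · set n : ℝ := (Fintype.card V : ℝ) with hn
    have hnpos : 0 < n := by
      simp only [hn, Nat.cast_pos]
      exact Fintype.card_pos
    set δ : ℝ := ε / (2 * n) with hδ
    have hδpos : 0 < δ := by positivity
    set U : ℝ → Matrix V V ℂ := qWalk A with hU
    set K : Set (Matrix V V ℂ) := closure (Set.range U) with hK
    have hbound : Set.range U ⊆ Metric.closedBall 0 1 := by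
      rintro _ ⟨t, rfl⟩
      rw [Metric.mem_closedBall, dist_zero_right]
      exact qWalk_norm_le_one hA t
    have hKc : IsCompact K := by
      have : ProperSpace (Matrix V V ℂ) := FiniteDimensional.proper ℂ _
      exact (isCompact_closedBall (0 : Matrix V V ℂ) 1).of_isClosed_subset isClosed_closure
        (closure_minimal hbound Metric.isClosed_closedBall)
    have hcover : K ⊆ ⋃ t : ℝ, Metric.ball (U t) δ := by
      intro x hx
      rcases Metric.mem_closure_iff.mp hx δ hδpos with ⟨y, ⟨t, rfl⟩, hy⟩
      exact Set.mem_iUnion.mpr ⟨t, Metric.mem_ball.mpr hy⟩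
    obtain ⟨F, hF⟩ := hKc.elim_finite_subcover (fun t : ℝ => Metric.ball (U t) δ)
      (fun t => Metric.isOpen_ball) hcover
    have hU0 : U 0 ∈ K := subset_closure (Set.mem_range_self 0)
    have hFne : F.Nonempty := by
      rcases Set.mem_iUnion₂.mp (hF hU0) with ⟨t, ht, _⟩
      exact ⟨t, ht⟩
    set M : ℝ := F.sup' hFne (fun t => |t|) with hM
    have hM0 : 0 ≤ M := by
      obtain ⟨t, ht⟩ := hFne
      exact le_trans (abs_nonneg t) (Finset.le_sup' _ ht)
    refine ⟨2 * M + 1, by linarith, fun s => ?_⟩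
    have hmem : U (s + M) ∈ K := subset_closure (Set.mem_range_self _)
    rcases Set.mem_iUnion₂.mp (hF hmem) with ⟨t₀, ht₀F, ht₀⟩
    rw [Metric.mem_ball] at ht₀
    have habs : |t₀| ≤ M := Finset.le_sup' _ ht₀F
    refine ⟨s + M - t₀, by cases abs_le.mp habs; linarith,
      by cases abs_le.mp habs; linarith, ?_⟩
    have hfact : U (s + M - t₀) - 1 = (U (s + M) - U t₀) * U (-t₀) := by
      rw [sub_mul, ← qWalk_add, ← hU]
      rw [show s + M + -t₀ = s + M - t₀ from by ring]
      rw [show U t₀ * U (-t₀) = 1 from qWalk_mul_neg A t₀]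
    rw [hfact]
    calc ‖(U (s + M) - U t₀) * U (-t₀)‖
        ≤ n * ‖U (s + M) - U t₀‖ * ‖U (-t₀)‖ := matrix_norm_mul_le _ _
      _ ≤ n * ‖U (s + M) - U t₀‖ * 1 := by
          refine mul_le_mul_of_nonneg_left (qWalk_norm_le_one hA _) ?_
          have := norm_nonneg (U (s + M) - U t₀)
          positivity
      _ < n * δ * 1 := by
          rw [mul_one, mul_one]
          have hdist : ‖U (s + M) - U t₀‖ < δ := by rwa [← dist_eq_norm]
          exact mul_lt_mul_of_pos_left hdist hnpos
      _ < ε := by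
          rw [mul_one, hδ]
          rw [show n * (ε / (2 * n)) = ε / 2 from by field_simp]
          linarith
  · have : IsEmpty V := not_nonempty_iff.mp hV
    refine ⟨1, one_pos, fun s => ⟨s, le_refl s, by linarith, ?_⟩⟩
    have : qWalk A s - 1 = 0 := Subsingleton.elim _ _
    rw [this, norm_zero]
    exact hε
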